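/- If d > r₂ + e·a·K₁/(1 + a·h·K₁), then the equilibrium (K₁, 0) of the host–parasite ecological model is globally asymptotically stable among initial conditions with positive host density: every solution t ↦ (x₁(t), x₂(t)) on [0, ∞) with x₁(0) > 0 and x₂(0) ≥ 0 satisfies x₁(t) → K₁ and x₂(t) → 0 as t → ∞. -/

import Mathlib

open Set Filter

lemma myMono {f f' : ℝ → ℝ} {s u : ℝ}
    (hderiv : ∀ t ∈ Set.Icc s u, HasDerivAt f (f' t) t)
    (hpos : ∀ t ∈ Set.Ioo s u, 0 ≤ f' t) :
    MonotoneOn f (Set.Icc s u) := by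
  apply monotoneOn_of_deriv_nonneg (convex_Icc s u)
  · exact fun t ht => (hderiv t ht).continuousAt.continuousWithinAt
  · intro t ht
    rw [interior_Icc] at ht
    exact (hderiv t (Set.mem_Icc_of_Ioo ht)).differentiableAt.differentiableWithinAt
  · intro t ht
    rw [interior_Icc] at ht
    rw [(hderiv t (Set.mem_Icc_of_Ioo ht)).deriv]
    exact hpos t ht

lemma myAnti {f f' : ℝ → ℝ} {s u : ℝ}
    (hderiv : ∀ t ∈ Set.Icc s u, HasDerivAt f (f' t) t)
    (hneg : ∀ t ∈ Set.Ioo s u, f' t ≤ 0) :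
    AntitoneOn f (Set.Icc s u) := by
  apply antitoneOn_of_deriv_nonpos (convex_Icc s u)
  · exact fun t ht => (hderiv t ht).continuousAt.continuousWithinAt
  · intro t ht
    rw [interior_Icc] at ht
    exact (hderiv t (Set.mem_Icc_of_Ioo ht)).differentiableAt.differentiableWithinAt
  · intro t ht
    rw [interior_Icc] at ht
    rw [(hderiv t (Set.mem_Icc_of_Ioo ht)).deriv]
    exact hneg t ht

/-- Upper barrier: if f' ≤ 0 whenever f ≥ c on [s,u], and f s ≤ c, then f u ≤ c. -/
lemma barrier_le {f f' : ℝ → ℝ} {c s u : ℝ} (hsu : s ≤ u)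
    (hderiv : ∀ t ∈ Set.Icc s u, HasDerivAt f (f' t) t)
    (hneg : ∀ t ∈ Set.Icc s u, c ≤ f t → f' t ≤ 0)
    (hs : f s ≤ c) : f u ≤ c := by
  by_contra hu
  push_neg at hu
  have hcont : ContinuousOn f (Set.Icc s u) :=
    fun t ht => (hderiv t ht).continuousAt.continuousWithinAt
  set S := Set.Icc s u ∩ f ⁻¹' Set.Iic c with hSdef
  have hSne : S.Nonempty := ⟨s, ⟨le_refl s, hsu⟩, hs⟩
  have hScl : IsClosed S := hcont.preimage_isClosed_of_isClosed isClosed_Icc isClosed_Iic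
  have hScomp : IsCompact S := isCompact_Icc.of_isClosed_subset hScl Set.inter_subset_left
  set v := sSup S with hvdef
  have hv : v ∈ S := hScomp.sSup_mem hSne
  have hvu : v ≤ u := hv.1.2
  have hvs : s ≤ v := hv.1.1
  have hgt : ∀ t ∈ Set.Ioc v u, c < f t := by
    intro t ht
    by_contra hle
    push_neg at hle
    have : t ∈ S := ⟨⟨hvs.trans ht.1.le, ht.2⟩, hle⟩
    exact absurd (le_csSup hScomp.bddAbove this) (not_le.mpr ht.1)
  have hanti : AntitoneOn f (Set.Icc v u) := by
    apply myAnti (fun t ht => hderiv t ⟨hvs.trans ht.1, ht.2⟩)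
    intro t ht
    exact hneg t ⟨hvs.trans ht.1.le, ht.2.le⟩ (hgt t ⟨ht.1, ht.2.le⟩).le
  have := hanti ⟨le_refl v, hvu⟩ ⟨hvu, le_refl u⟩ hvu
  exact absurd (this.trans hv.2) (not_le.mpr hu)

lemma barrier_ge {f f' : ℝ → ℝ} {c s u : ℝ} (hsu : s ≤ u)
    (hderiv : ∀ t ∈ Set.Icc s u, HasDerivAt f (f' t) t)
    (hpos : ∀ t ∈ Set.Icc s u, f t ≤ c → 0 ≤ f' t)
    (hs : c ≤ f s) : c ≤ f u := by
  have := barrier_le (f := fun t => -f t) (f' := fun t => -f' t) (c := -c) hsu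
    (fun t ht => (hderiv t ht).neg)
    (fun t ht hc => by simpa using hpos t ht (by linarith))
    (by simpa using hs)
  linarith

/-- If f' ≤ -δ whenever f ≥ c (for t ≥ s), then eventually f ≤ c. -/
lemma eventually_le_of_deriv {f f' : ℝ → ℝ} {c δ s : ℝ} (hδ : 0 < δ)
    (hderiv : ∀ t, s ≤ t → HasDerivAt f (f' t) t)
    (hneg : ∀ t, s ≤ t → c ≤ f t → f' t ≤ -δ) :
    ∀ᶠ t in Filter.atTop, f t ≤ c := by
  have hkey : ∃ u, s ≤ u ∧ f u ≤ c := by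
    by_contra hctra
    push_neg at hctra
    set u := s + (f s - c) / δ + 1 with hudef
    have hfsc : c < f s := hctra s (le_refl s)
    have hsu : s ≤ u := by
      have : 0 ≤ (f s - c) / δ := div_nonneg (by linarith) hδ.le
      simp only [hudef]; linarith
    have hanti : AntitoneOn (fun t => f t + δ * t) (Set.Icc s u) := by
      apply myAnti (f' := fun t => f' t + δ)
        (fun t ht => ((hderiv t ht.1).add ((hasDerivAt_id t).const_mul δ)).congr_deriv (by ring))
      intro t ht
      have := hneg t ht.1.le (hctra t ht.1.le).le
      linarith
    have h2 := hanti ⟨le_refl s, hsu⟩ ⟨hsu, le_refl u⟩ hsu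
    simp only at h2
    have h3 : f u ≤ f s - δ * (u - s) := by linarith
    have h4 : δ * (u - s) = (f s - c) + δ := by
      rw [hudef]; field_simp; ring
    have : f u ≤ c - δ := by linarith
    exact absurd (hctra u hsu) (not_lt.mpr (by linarith))
  obtain ⟨u, hsu, hu⟩ := hkey
  filter_upwards [Filter.eventually_ge_atTop u] with t htu
  exact barrier_le htu (fun t' ht' => hderiv t' (hsu.trans ht'.1))
    (fun t' ht' hc => (hneg t' (hsu.trans ht'.1) hc).trans (by linarith)) hu

lemma eventually_ge_of_deriv {f f' : ℝ → ℝ} {c δ s : ℝ} (hδ : 0 < δ)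
    (hderiv : ∀ t, s ≤ t → HasDerivAt f (f' t) t)
    (hpos : ∀ t, s ≤ t → f t ≤ c → δ ≤ f' t) :
    ∀ᶠ t in Filter.atTop, c ≤ f t := by
  have := eventually_le_of_deriv (f := fun t => -f t) (f' := fun t => -f' t) (c := -c) hδ
    (fun t ht => (hderiv t ht).neg)
    (fun t ht hc => by have := hpos t ht (by linarith); linarith)
  filter_upwards [this] with t ht
  simpa using ht

/-- Monotonicity of the Holling response. -/
lemma Fmono {e a h x y : ℝ} (he : 0 < e) (ha : 0 < a) (hh : 0 < h)
    (hx : 0 ≤ x) (hxy : x ≤ y) :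
    e * a * x / (1 + h * a * x) ≤ e * a * y / (1 + a * h * y) := by
  have hy : 0 ≤ y := hx.trans hxy
  have hdx : (0:ℝ) < 1 + h * a * x := by nlinarith [mul_nonneg (mul_pos hh ha).le hx]
  have hdy : (0:ℝ) < 1 + a * h * y := by nlinarith [mul_nonneg (mul_pos ha hh).le hy]
  rw [div_le_div_iff₀ hdx hdy]
  nlinarith [mul_nonneg (mul_pos he ha).le (sub_nonneg.2 hxy)]

set_option maxHeartbeats 1000000 in
/-- if d > r₂ + eaK₁/(1 + ahK₁), then (K₁, 0) is globally
asymptotically stable among initial conditions with positive host density: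
x₁(t) → K₁ and x₂(t) → 0 as t → ∞. -/
theorem hostOnly_global_stability
    (r₁ r₂ K₁ K₂ a h e d : ℝ)
    (hr₁ : 0 < r₁) (hr₂ : 0 < r₂) (hK₁ : 0 < K₁) (hK₂ : 0 < K₂)
    (ha : 0 < a) (hh : 0 < h) (he : 0 < e) (hd : 0 ≤ d)
    (hcond : d > r₂ + e * a * K₁ / (1 + a * h * K₁))
    (x₁ x₂ : ℝ → ℝ)
    (hx₁ : ∀ t : ℝ, 0 ≤ t →
      HasDerivAt x₁ (x₁ t * (r₁ * (1 - x₁ t / K₁) - a * x₂ t / (1 + h * a * x₁ t))) t)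
    (hx₂ : ∀ t : ℝ, 0 ≤ t →
      HasDerivAt x₂ (x₂ t * (e * a * x₁ t / (1 + h * a * x₁ t) - d + r₂ * (1 - x₂ t / K₂))) t)
    (hx₁0 : 0 < x₁ 0) (hx₂0 : 0 ≤ x₂ 0) :
    Filter.Tendsto x₁ Filter.atTop (nhds K₁) ∧
    Filter.Tendsto x₂ Filter.atTop (nhds 0) := by
  -- STEP A: positivity of x₁
  have hpos1 : ∀ t, 0 ≤ t → 0 < x₁ t := by
    by_contra hcon
    push_neg at hcon
    obtain ⟨t₀, ht₀0, ht₀⟩ := hcon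
    have hcont1 : ContinuousOn x₁ (Set.Icc 0 t₀) :=
      fun t ht => (hx₁ t ht.1).continuousAt.continuousWithinAt
    have hcont2 : ContinuousOn x₂ (Set.Icc 0 t₀) :=
      fun t ht => (hx₂ t ht.1).continuousAt.continuousWithinAt
    set S := Set.Icc 0 t₀ ∩ x₁ ⁻¹' Set.Iic 0 with hSdef
    have hSne : S.Nonempty := ⟨t₀, ⟨ht₀0, le_refl _⟩, ht₀⟩
    have hScl : IsClosed S := hcont1.preimage_isClosed_of_isClosed isClosed_Icc isClosed_Iic
    have hScomp : IsCompact S := isCompact_Icc.of_isClosed_subset hScl Set.inter_subset_left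
    set w := sInf S with hwdef
    have hwS : w ∈ S := hScomp.sInf_mem hSne
    have hw0 : 0 ≤ w := hwS.1.1
    have hwt₀ : w ≤ t₀ := hwS.1.2
    have hxw : x₁ w ≤ 0 := hwS.2
    have hlt : ∀ t, 0 ≤ t → t < w → 0 < x₁ t := by
      intro t h0 htw
      by_contra hle
      push_neg at hle
      have : t ∈ S := ⟨⟨h0, htw.le.trans hwt₀⟩, hle⟩
      exact absurd (csInf_le hScomp.bddBelow this) (not_le.mpr htw)
    obtain ⟨B₁, hB₁⟩ := isCompact_Icc.exists_bound_of_continuousOn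
      (hcont1.mono (Set.Icc_subset_Icc le_rfl hwt₀))
    obtain ⟨B₂, hB₂⟩ := isCompact_Icc.exists_bound_of_continuousOn
      (hcont2.mono (Set.Icc_subset_Icc le_rfl hwt₀))
    set M := r₁ + r₁ * B₁ / K₁ + a * B₂ with hMdef
    have hmono : MonotoneOn (fun t => x₁ t * Real.exp (M * t)) (Set.Icc 0 w) := by
      apply myMono (f' := fun t =>
        Real.exp (M * t) *
        (x₁ t * ((r₁ * (1 - x₁ t / K₁) - a * x₂ t / (1 + h * a * x₁ t)) + M)))
      · intro t ht
        have hexp : HasDerivAt (fun t => Real.exp (M * t)) (Real.exp (M * t) * (M * 1)) t :=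
          ((hasDerivAt_id t).const_mul M).exp
        exact ((hx₁ t ht.1).mul hexp).congr_deriv (by ring)
      · intro t ht
        have hx1t : 0 < x₁ t := hlt t ht.1.le ht.2
        have hD : (1:ℝ) ≤ 1 + h * a * x₁ t := by nlinarith [mul_nonneg (mul_pos hh ha).le hx1t.le]
        have hb1 : |x₁ t| ≤ B₁ := by
          have := hB₁ t ⟨ht.1.le, ht.2.le⟩; rwa [Real.norm_eq_abs] at this
        have hb2 : |x₂ t| ≤ B₂ := by
          have := hB₂ t ⟨ht.1.le, ht.2.le⟩; rwa [Real.norm_eq_abs] at this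
        have hq : a * x₂ t / (1 + h * a * x₁ t) ≤ a * B₂ := by
          calc a * x₂ t / (1 + h * a * x₁ t)
              ≤ |a * x₂ t / (1 + h * a * x₁ t)| := le_abs_self _
            _ = |a * x₂ t| / |1 + h * a * x₁ t| := by rw [abs_div]
            _ ≤ |a * x₂ t| / 1 := by
                apply div_le_div_of_nonneg_left (abs_nonneg _) one_pos
                rwa [abs_of_pos (by linarith : (0:ℝ) < 1 + h * a * x₁ t)]
            _ = |a| * |x₂ t| := by rw [div_one, abs_mul]
            _ ≤ a * B₂ := by
                rw [abs_of_pos ha]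
                exact mul_le_mul_of_nonneg_left hb2 ha.le
        have hdiv : x₁ t / K₁ ≤ B₁ / K₁ :=
          (div_le_div_iff_of_pos_right hK₁).2 ((le_abs_self _).trans hb1)
        have hmul : r₁ * (x₁ t / K₁) ≤ r₁ * (B₁ / K₁) :=
          mul_le_mul_of_nonneg_left hdiv hr₁.le
        have hg : 0 ≤ (r₁ * (1 - x₁ t / K₁) - a * x₂ t / (1 + h * a * x₁ t)) + M := by
          rw [hMdef]
          have : r₁ * B₁ / K₁ = r₁ * (B₁ / K₁) := by ring
          nlinarith [hq, hmul]
        positivity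
    have hkey := hmono (Set.mem_Icc.2 ⟨le_rfl, hw0⟩) (Set.mem_Icc.2 ⟨hw0, le_rfl⟩) hw0
    simp only [mul_zero, Real.exp_zero, mul_one] at hkey
    nlinarith [Real.exp_pos (M * w), hkey]
  -- STEP B: nonnegativity of x₂
  have hnn2 : ∀ t, 0 ≤ t → 0 ≤ x₂ t := by
    by_contra hcon
    push_neg at hcon
    obtain ⟨t₀, ht₀0, ht₀⟩ := hcon
    have hcont2 : ContinuousOn x₂ (Set.Icc 0 t₀) :=
      fun t ht => (hx₂ t ht.1).continuousAt.continuousWithinAt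
    set S := Set.Icc 0 t₀ ∩ x₂ ⁻¹' Set.Ici 0 with hSdef
    have hSne : S.Nonempty := ⟨0, ⟨le_rfl, ht₀0⟩, hx₂0⟩
    have hScl : IsClosed S := hcont2.preimage_isClosed_of_isClosed isClosed_Icc isClosed_Ici
    have hScomp : IsCompact S := isCompact_Icc.of_isClosed_subset hScl Set.inter_subset_left
    set v := sSup S with hvdef
    have hvS : v ∈ S := hScomp.sSup_mem hSne
    have hv0 : 0 ≤ v := hvS.1.1
    have hvt₀ : v ≤ t₀ := hvS.1.2
    have hxv : 0 ≤ x₂ v := hvS.2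
    have hlt : ∀ t, v < t → t ≤ t₀ → x₂ t < 0 := by
      intro t hvt htt₀
      by_contra hle
      push_neg at hle
      have : t ∈ S := ⟨⟨hv0.trans hvt.le, htt₀⟩, hle⟩
      exact absurd (le_csSup hScomp.bddAbove this) (not_le.mpr hvt)
    obtain ⟨B₂, hB₂⟩ := isCompact_Icc.exists_bound_of_continuousOn
      (hcont2.mono (Set.Icc_subset_Icc hv0 le_rfl))
    set M := e / h + r₂ + r₂ * B₂ / K₂ with hMdef
    have hmono : MonotoneOn (fun t => x₂ t * Real.exp (-(M * t))) (Set.Icc v t₀) := by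
      apply myMono (f' := fun t =>
        Real.exp (-(M * t)) *
        (x₂ t * ((e * a * x₁ t / (1 + h * a * x₁ t) - d + r₂ * (1 - x₂ t / K₂)) - M)))
      · intro t ht
        have hexp : HasDerivAt (fun t => Real.exp (-(M * t)))
            (Real.exp (-(M * t)) * (-(M * 1))) t :=
          (((hasDerivAt_id t).const_mul M).neg).exp
        exact ((hx₂ t (hv0.trans ht.1)).mul hexp).congr_deriv (by ring)
      · intro t ht
        have ht0 : 0 ≤ t := hv0.trans ht.1.le
        have hx1t : 0 < x₁ t := hpos1 t ht0
        have hx2t : x₂ t < 0 := hlt t ht.1 ht.2.le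
        have hD : (0:ℝ) < 1 + h * a * x₁ t := by
          nlinarith [mul_nonneg (mul_pos hh ha).le hx1t.le]
        have hb2 : |x₂ t| ≤ B₂ := by
          have := hB₂ t ⟨ht.1.le, ht.2.le⟩; rwa [Real.norm_eq_abs] at this
        have hF : e * a * x₁ t / (1 + h * a * x₁ t) ≤ e / h := by
          rw [div_le_div_iff₀ hD hh]
          nlinarith
        have hr : r₂ * (x₂ t / K₂) ≥ r₂ * (-B₂ / K₂) := by
          apply mul_le_mul_of_nonneg_left _ hr₂.le
          exact (div_le_div_iff_of_pos_right hK₂).2 (neg_le_of_abs_le hb2)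
        have hg : (e * a * x₁ t / (1 + h * a * x₁ t) - d + r₂ * (1 - x₂ t / K₂)) - M ≤ 0 := by
          rw [hMdef]
          have h1 : r₂ * B₂ / K₂ = -(r₂ * (-B₂ / K₂)) := by ring
          nlinarith [hF, hr]
        have h0 : 0 ≤ x₂ t * ((e * a * x₁ t / (1 + h * a * x₁ t) - d + r₂ * (1 - x₂ t / K₂)) - M) :=
          mul_nonneg_iff.2 (Or.inr ⟨hx2t.le, hg⟩)
        exact mul_nonneg (Real.exp_pos _).le h0
    have hkey := hmono (Set.mem_Icc.2 ⟨le_rfl, hvt₀⟩) (Set.mem_Icc.2 ⟨hvt₀, le_rfl⟩) hvt₀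
    simp only at hkey
    nlinarith [Real.exp_pos (-(M * v)), Real.exp_pos (-(M * t₀)),
      mul_nonneg hxv (Real.exp_pos (-(M * v))).le,
      mul_pos (neg_pos.2 ht₀) (Real.exp_pos (-(M * t₀)))]
  -- STEP C: eventual upper bound for x₁
  have hub : ∀ ε : ℝ, 0 < ε → ∀ᶠ t in Filter.atTop, x₁ t ≤ K₁ + ε := by
    intro ε hε
    have hδ : 0 < (K₁ + ε) * r₁ * ε / K₁ := by positivity
    apply eventually_le_of_deriv (s := 0) hδ (fun t ht => hx₁ t ht)
    intro t ht hc
    have hx1t : 0 < x₁ t := hpos1 t ht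
    have hD : (0:ℝ) < 1 + h * a * x₁ t := by
      nlinarith [mul_nonneg (mul_pos hh ha).le hx1t.le]
    have hq : 0 ≤ a * x₂ t / (1 + h * a * x₁ t) :=
      div_nonneg (mul_nonneg ha.le (hnn2 t ht)) hD.le
    have key : x₁ t * (r₁ * (1 - x₁ t / K₁)) ≤ -((K₁ + ε) * r₁ * ε / K₁) := by
      have h1 : (K₁ + ε) * ε ≤ x₁ t * (x₁ t - K₁) := by nlinarith
      have h2 : x₁ t * (r₁ * (1 - x₁ t / K₁)) + (K₁ + ε) * r₁ * ε / K₁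
          = (r₁ / K₁) * ((K₁ + ε) * ε - x₁ t * (x₁ t - K₁)) := by
        field_simp
        ring
      nlinarith [mul_nonneg (div_pos hr₁ hK₁).le (sub_nonneg.2 h1), h2]
    nlinarith [mul_nonneg hx1t.le hq, key]
  -- STEP D: choice of ε₀ with F(K₁+ε₀) < d - r₂
  have hden : (0:ℝ) < 1 + a * h * K₁ := by nlinarith [mul_nonneg (mul_pos ha hh).le hK₁.le]
  have hFK : e * a * K₁ / (1 + a * h * K₁) < d - r₂ := by linarith
  have hcontF : ContinuousAt (fun u : ℝ => e * a * u / (1 + a * h * u)) K₁ :=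
    ContinuousAt.div (by fun_prop) (by fun_prop) (ne_of_gt hden)
  have hev : ∀ᶠ u in nhds K₁, e * a * u / (1 + a * h * u) < d - r₂ :=
    hcontF.eventually_lt continuousAt_const hFK
  rw [Metric.eventually_nhds_iff] at hev
  obtain ⟨ρ, hρ, hball⟩ := hev
  set X := K₁ + ρ / 2 with hXdef
  have hXK : K₁ ≤ X := by simp only [hXdef]; linarith
  have hXlt : e * a * X / (1 + a * h * X) < d - r₂ := by
    apply hball
    rw [Real.dist_eq, hXdef]
    rw [show K₁ + ρ / 2 - K₁ = ρ / 2 by ring, abs_of_pos (by linarith)]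
    linarith
  set δ₀ := d - r₂ - e * a * X / (1 + a * h * X) with hδ₀def
  have hδ₀ : 0 < δ₀ := by simp only [hδ₀def]; linarith
  -- STEP E: x₂ → 0
  obtain ⟨T₁', hT₁'⟩ := Filter.eventually_atTop.1 (hub (ρ / 2) (by linarith))
  set T₁ := max T₁' 0 with hT₁def
  have hT₁0 : 0 ≤ T₁ := le_max_right _ _
  have hT₁ : ∀ t, T₁ ≤ t → x₁ t ≤ X := fun t ht => hT₁' t ((le_max_left _ _).trans ht)
  have hx2dec : ∀ t, T₁ ≤ t →
      x₂ t ≤ (x₂ T₁ * Real.exp (δ₀ * T₁)) * Real.exp (-(δ₀ * t)) := by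
    intro t htT
    have hanti : AntitoneOn (fun t => x₂ t * Real.exp (δ₀ * t)) (Set.Icc T₁ t) := by
      apply myAnti (f' := fun t =>
        Real.exp (δ₀ * t) *
        (x₂ t * ((e * a * x₁ t / (1 + h * a * x₁ t) - d + r₂ * (1 - x₂ t / K₂)) + δ₀)))
      · intro s hs
        have hexp : HasDerivAt (fun u => Real.exp (δ₀ * u)) (Real.exp (δ₀ * s) * (δ₀ * 1)) s :=
          ((hasDerivAt_id s).const_mul δ₀).exp
        exact ((hx₂ s (hT₁0.trans hs.1)).mul hexp).congr_deriv (by ring)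
      · intro s hs
        have hs0 : 0 ≤ s := hT₁0.trans hs.1.le
        have hx2s : 0 ≤ x₂ s := hnn2 s hs0
        have hF : e * a * x₁ s / (1 + h * a * x₁ s) ≤ e * a * X / (1 + a * h * X) :=
          Fmono he ha hh (hpos1 s hs0).le (hT₁ s hs.1.le)
        have hr : 0 ≤ r₂ * (x₂ s / K₂) := mul_nonneg hr₂.le (div_nonneg hx2s hK₂.le)
        have hg : (e * a * x₁ s / (1 + h * a * x₁ s) - d + r₂ * (1 - x₂ s / K₂)) + δ₀ ≤ 0 := by
          simp only [hδ₀def]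
          nlinarith [hF, hr]
        have h0 : x₂ s * ((e * a * x₁ s / (1 + h * a * x₁ s) - d + r₂ * (1 - x₂ s / K₂)) + δ₀) ≤ 0 :=
          mul_nonpos_iff.2 (Or.inl ⟨hx2s, hg⟩)
        exact mul_nonpos_iff.2 (Or.inl ⟨(Real.exp_pos _).le, h0⟩)
    have hkey := hanti (Set.mem_Icc.2 ⟨le_rfl, htT⟩) (Set.mem_Icc.2 ⟨htT, le_rfl⟩) htT
    simp only at hkey
    calc x₂ t = (x₂ t * Real.exp (δ₀ * t)) * Real.exp (-(δ₀ * t)) := by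
          rw [mul_assoc, ← Real.exp_add]; simp
      _ ≤ (x₂ T₁ * Real.exp (δ₀ * T₁)) * Real.exp (-(δ₀ * t)) :=
          mul_le_mul_of_nonneg_right hkey (Real.exp_pos _).le
  have hx2tend : Filter.Tendsto x₂ Filter.atTop (nhds 0) := by
    have htop : Filter.Tendsto (fun t : ℝ => δ₀ * t) Filter.atTop Filter.atTop :=
      Filter.Tendsto.const_mul_atTop hδ₀ Filter.tendsto_id
    have hexp0 : Filter.Tendsto (fun t : ℝ => Real.exp (-(δ₀ * t))) Filter.atTop (nhds 0) :=
      Real.tendsto_exp_neg_atTop_nhds_zero.comp htop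
    have hC : Filter.Tendsto
        (fun t : ℝ => (x₂ T₁ * Real.exp (δ₀ * T₁)) * Real.exp (-(δ₀ * t)))
        Filter.atTop (nhds 0) := by
      have := hexp0.const_mul (x₂ T₁ * Real.exp (δ₀ * T₁))
      simpa using this
    apply tendsto_of_tendsto_of_tendsto_of_le_of_le' tendsto_const_nhds hC
    · filter_upwards [Filter.eventually_ge_atTop (0:ℝ)] with t ht
      exact hnn2 t ht
    · filter_upwards [Filter.eventually_ge_atTop T₁] with t ht
      exact hx2dec t ht
  -- STEP F: eventual lower bound for x₁
  have hlb : ∀ ε : ℝ, 0 < ε → ε < K₁ → ∀ᶠ t in Filter.atTop, K₁ - ε ≤ x₁ t := by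
    intro ε hε hεK
    set c := r₁ * ε / (2 * K₁) with hcdef
    have hc : 0 < c := by positivity
    have hevs : ∀ᶠ t in Filter.atTop, x₂ t < c / a :=
      hx2tend.eventually_lt_const (by positivity)
    obtain ⟨T₂', hT₂'⟩ := Filter.eventually_atTop.1 hevs
    set T₂ := max T₂' 0 with hT₂def
    have hT₂0 : 0 ≤ T₂ := le_max_right _ _
    have hT₂ : ∀ t, T₂ ≤ t → a * x₂ t ≤ c := by
      intro t ht
      have := hT₂' t ((le_max_left _ _).trans ht)
      rw [lt_div_iff₀ ha] at this
      linarith [this]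
    -- bound the predation term and the growth of x₁ below K₁ - ε
    have hgkey : ∀ t, T₂ ≤ t → x₁ t ≤ K₁ - ε →
        c ≤ r₁ * (1 - x₁ t / K₁) - a * x₂ t / (1 + h * a * x₁ t) := by
      intro t ht hxle
      have ht0 : 0 ≤ t := hT₂0.trans ht
      have hx1t : 0 < x₁ t := hpos1 t ht0
      have hD : (1:ℝ) ≤ 1 + h * a * x₁ t := by
        nlinarith [mul_nonneg (mul_pos hh ha).le hx1t.le]
      have hp : a * x₂ t / (1 + h * a * x₁ t) ≤ c := by
        calc a * x₂ t / (1 + h * a * x₁ t) ≤ a * x₂ t :=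
              div_le_self (mul_nonneg ha.le (hnn2 t ht0)) hD
          _ ≤ c := hT₂ t ht
      have hdiv : x₁ t / K₁ ≤ (K₁ - ε) / K₁ := (div_le_div_iff_of_pos_right hK₁).2 hxle
      have hfe : (K₁ - ε) / K₁ = 1 - ε / K₁ := by field_simp
      have h2c : r₁ * (ε / K₁) = 2 * c := by rw [hcdef]; field_simp
      nlinarith [mul_le_mul_of_nonneg_left hdiv hr₁.le]
    have hm₀ : 0 < min (x₁ T₂) (K₁ - ε) :=
      lt_min (hpos1 T₂ hT₂0) (by linarith)
    set m₀ := min (x₁ T₂) (K₁ - ε) with hm₀def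
    have claim1 : ∀ t, T₂ ≤ t → m₀ ≤ x₁ t := by
      intro t ht
      apply barrier_ge ht (fun s hs => hx₁ s (hT₂0.trans hs.1)) _ (min_le_left _ _)
      intro s hs hxs
      have hx1s : 0 < x₁ s := hpos1 s (hT₂0.trans hs.1)
      have hg := hgkey s hs.1 (hxs.trans (min_le_right _ _))
      exact mul_nonneg hx1s.le (hc.le.trans hg)
    apply eventually_ge_of_deriv (δ := m₀ * c) (mul_pos hm₀ hc)
      (fun t ht => hx₁ t (hT₂0.trans ht))
    intro t ht hxle
    have hx1t : 0 < x₁ t := hpos1 t (hT₂0.trans ht)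
    have hg := hgkey t ht hxle
    calc m₀ * c ≤ x₁ t * (r₁ * (1 - x₁ t / K₁) - a * x₂ t / (1 + h * a * x₁ t)) :=
      mul_le_mul (claim1 t ht) hg hc.le hx1t.le
    _ = _ := rfl
  -- STEP G: conclusion
  have hx1tend : Filter.Tendsto x₁ Filter.atTop (nhds K₁) := by
    rw [tendsto_order]
    constructor
    · intro l hl
      set ε := min ((K₁ - l) / 2) (K₁ / 2) with hεdef
      have hε : 0 < ε := lt_min (by linarith) (by linarith)
      have hεK : ε < K₁ := (min_le_right _ _).trans_lt (by linarith)
      filter_upwards [hlb ε hε hεK] with t htx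
      have h1 : ε ≤ (K₁ - l) / 2 := min_le_left _ _
      linarith
    · intro u hu
      filter_upwards [hub ((u - K₁) / 2) (by linarith)] with t htx
      linarith
  exact ⟨hx1tend, hx2tend⟩
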